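/- With the explicit solution v(p, b₁*, b₂*) = k₁((1−p)/p)^{α₁(λ̄)} + k₂((1−p)/p)^{α₂(λ̄)} + (c−(λ̄−λ̲)²)/r on (b₁*, b₂*), where k₁, k₂ are determined by v(b₁*) = 0, v(b₂*+) = c/r − (λ̄−λ̲)/(α₁(λ̲)λ̲), and assuming −α₂(λ̄)·((λ̄−λ̲)²/r − (λ̄−λ̲)/(α₁(λ̲)λ̲)) < (λ̄−λ̲)/λ̲ < c/r: the one-sided limit lim_{b₂*→1⁻} b₂*(1−b₂*)·v_p(b₂*−, b₁*, b₂*) = −α₂(λ̄)·((λ̄−λ̲)²/r − (λ̄−λ̲)/(α₁(λ̲)λ̲)). -/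
import Mathlib


noncomputable def alpha1 (r lam : ℝ) : ℝ := 1/2 + Real.sqrt (8*r/lam^2 + 1) / 2
noncomputable def alpha2 (r lam : ℝ) : ℝ := 1/2 - Real.sqrt (8*r/lam^2 + 1) / 2

private lemma aux_alg (A B M N P u v w : ℝ) (hu : u = w * v) (hv : v ≠ 0)
    (hD2 : w - P ≠ 0) :
    -(A * ((M + N * v) / (u - P * v)) * u
        + B * (-N - (M + N * v) / (u - P * v) * P) * v)
      = (-A*(M*w+N*u) + B*(N*u+P*M)) / (w - P) := by
  subst hu
  have hD : w * v - P * v ≠ 0 := by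
    rw [show w * v - P * v = (w - P) * v by ring]
    exact mul_ne_zero hD2 hv
  field_simp
  ring

theorem stmt14 (r c l L b1 : ℝ)
    (hr : 0 < r) (hc : 0 < c) (hl : 0 < l) (hlL : l < L)
    (hb1 : b1 ∈ Set.Ioo (0:ℝ) 1)
    (hcond1 : -alpha2 r L * ((L-l)^2/r - (L-l)/(alpha1 r l * l)) < (L-l)/l)
    (hcond2 : (L-l)/l < c/r)
    (k1 k2 G : ℝ → ℝ)
    (hk1 : ∀ b2 ∈ Set.Ioo b1 1,
      k1 b2 = ((L-l)^2/r - (L-l)/(alpha1 r l * l)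
          + ((c-(L-l)^2)/r) * ((1-b1)/b1) ^ (-(alpha2 r L)) * ((1-b2)/b2) ^ (alpha2 r L))
        / (((1-b2)/b2) ^ (alpha1 r L)
          - ((1-b1)/b1) ^ (alpha1 r L - alpha2 r L) * ((1-b2)/b2) ^ (alpha2 r L)))
    (hk2 : ∀ b2 ∈ Set.Ioo b1 1,
      k2 b2 = ((L-l)^2-c)/r * ((1-b1)/b1) ^ (-(alpha2 r L))
        - k1 b2 * ((1-b1)/b1) ^ (alpha1 r L - alpha2 r L))
    (hG : ∀ b2 ∈ Set.Ioo b1 1,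
      G b2 = -(alpha1 r L * k1 b2 * ((1-b2)/b2) ^ (alpha1 r L)
        + alpha2 r L * k2 b2 * ((1-b2)/b2) ^ (alpha2 r L))) :
    Filter.Tendsto G (nhdsWithin 1 (Set.Ioo b1 1))
      (nhds (-alpha2 r L * ((L-l)^2/r - (L-l)/(alpha1 r l * l)))) := by
  obtain ⟨hb10, hb11⟩ := hb1
  set A := alpha1 r L with hAdef
  set B := alpha2 r L with hBdef
  set M : ℝ := (L-l)^2/r - (L-l)/(alpha1 r l * l) with hM
  set q : ℝ := (1-b1)/b1 with hq
  have hq0 : 0 < q := div_pos (by linarith) hb10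
  set N : ℝ := ((c-(L-l)^2)/r) * q ^ (-B) with hN
  set P : ℝ := q ^ (A - B) with hP
  have hs : 1 < Real.sqrt (8*r/L^2 + 1) := by
    have hL : 0 < L := lt_trans hl hlL
    have h8 : 0 < 8*r/L^2 := by positivity
    have h1 : (1:ℝ) = Real.sqrt 1 := by simp
    rw [h1]
    exact Real.sqrt_lt_sqrt (by norm_num) (by linarith)
  have hB : B < 0 := by simp only [hBdef, alpha2]; linarith
  have hA : 0 < A := by
    have := Real.sqrt_nonneg (8*r/L^2 + 1)
    simp only [hAdef, alpha1]; linarith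
  have hAB : 0 < A - B := by linarith
  have hP0 : 0 < P := Real.rpow_pos_of_pos hq0 _
  set F : ℝ → ℝ := fun x =>
    (-A*(M*x^(A-B)+N*x^A) + B*(N*x^A+P*M)) / (x^(A-B) - P) with hF
  have key : ∀ b2 ∈ Set.Ioo b1 1, G b2 = F ((1-b2)/b2) := by
    intro b2 hb2
    obtain ⟨h1, h2⟩ := hb2
    have hb20 : 0 < b2 := lt_trans hb10 h1
    set x : ℝ := (1-b2)/b2 with hx
    have hx0 : 0 < x := div_pos (by linarith) hb20
    have hxq : x < q := by
      rw [hx, hq, div_lt_div_iff₀ hb20 hb10]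
      nlinarith
    have hv0 : 0 < x^B := Real.rpow_pos_of_pos hx0 _
    have hwP : x^(A-B) < P := Real.rpow_lt_rpow hx0.le hxq hAB
    have hu : x^A = x^(A-B) * x^B := by
      rw [← Real.rpow_add hx0]; ring_nf
    have hD2 : x^(A-B) - P ≠ 0 := by linarith
    have hNneg : ((L-l)^2-c)/r * q^(-B) = -N := by rw [hN]; ring
    show G b2 = (-A*(M*x^(A-B)+N*x^A) + B*(N*x^A+P*M)) / (x^(A-B) - P)
    rw [hG b2 ⟨h1, h2⟩, hk2 b2 ⟨h1, h2⟩, hk1 b2 ⟨h1, h2⟩, hNneg]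
    exact aux_alg A B M N P (x^A) (x^B) (x^(A-B)) hu hv0.ne' hD2
  have hxlim : Filter.Tendsto (fun b2 : ℝ => (1-b2)/b2) (nhdsWithin 1 (Set.Ioo b1 1))
      (nhdsWithin 0 (Set.Ioi 0)) := by
    rw [tendsto_nhdsWithin_iff]
    constructor
    · have hcont : ContinuousAt (fun b2 : ℝ => (1-b2)/b2) 1 :=
        ((continuousAt_const.sub continuousAt_id).div continuousAt_id (by norm_num))
      have h := hcont.tendsto.mono_left (nhdsWithin_le_nhds (s := Set.Ioo b1 1))
      norm_num at h
      exact h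
    · filter_upwards [self_mem_nhdsWithin] with b2 hb2
      exact div_pos (by linarith [hb2.2]) (lt_trans hb10 hb2.1)
  have hpow : ∀ t : ℝ, 0 < t → Filter.Tendsto (fun x : ℝ => x ^ t)
      (nhdsWithin 0 (Set.Ioi 0)) (nhds 0) := by
    intro t ht
    have hc' : ContinuousAt (fun x : ℝ => x ^ t) 0 :=
      Real.continuousAt_rpow_const 0 t (Or.inr ht.le)
    have h := hc'.tendsto.mono_left (nhdsWithin_le_nhds (s := Set.Ioi 0))
    rwa [Real.zero_rpow ht.ne'] at h
  have hFlim : Filter.Tendsto F (nhdsWithin 0 (Set.Ioi 0)) (nhds (-B*M)) := by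
    have hnum : Filter.Tendsto (fun x : ℝ => -A*(M*x^(A-B)+N*x^A) + B*(N*x^A+P*M))
        (nhdsWithin 0 (Set.Ioi 0)) (nhds (-A*(M*0+N*0) + B*(N*0+P*M))) :=
      (((((hpow _ hAB).const_mul M).add ((hpow _ hA).const_mul N)).const_mul
        (-A)).add ((((hpow _ hA).const_mul N).add tendsto_const_nhds).const_mul B))
    have hden : Filter.Tendsto (fun x : ℝ => x^(A-B) - P)
        (nhdsWithin 0 (Set.Ioi 0)) (nhds (0 - P)) :=
      (hpow _ hAB).sub tendsto_const_nhds
    have h := hnum.div hden (by simp [hP0.ne'])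
    have hval : (-A*(M*0+N*0) + B*(N*0+P*M)) / (0 - P) = -B*M := by
      field_simp [hP0.ne']
      ring
    rwa [hval] at h
  have hcomp := hFlim.comp hxlim
  have heq : (F ∘ fun b2 : ℝ => (1-b2)/b2) =ᶠ[nhdsWithin 1 (Set.Ioo b1 1)] G := by
    filter_upwards [self_mem_nhdsWithin] with b2 hb2
    exact (key b2 hb2).symm
  exact hcomp.congr' heq
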